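/- For any φ ≠ 0 and ψ, ξ ∈ ℝ², the third derivative of T(W)=ν̂(|W|)W satisfies |D³T(φ)(ψ,ψ,ξ)| ≤ (|ν̂'''(|φ|)|·|φ| + 9|ν̂''(|φ|)| + 12|ν̂'(|φ|)|/|φ|)·|ψ|²·|ξ|. -/

import Mathlib

open scoped RealInnerProductSpace

noncomputable section

/-- Third derivative of `T(W) = ν̂(|W|)W` at `φ ≠ 0` in directions `ψ, η, ξ`
(formula (5.6) of the paper), written out via `(a⊗b)c = (b·c)a`. -/
def D3T (ν : ℝ → ℝ) (φ ψ η ξ : EuclideanSpace ℝ (Fin 2)) : EuclideanSpace ℝ (Fin 2) :=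
  ((1 / ‖φ‖ ^ 2) * (deriv (deriv ν) ‖φ‖ - deriv ν ‖φ‖ / ‖φ‖) * ⟪φ, ξ⟫) •
      (⟪φ, η⟫ • ψ + ⟪φ, ψ⟫ • η + ⟪ψ, η⟫ • φ) +
  (deriv ν ‖φ‖ / ‖φ‖) • (⟪ξ, η⟫ • ψ + ⟪ξ, ψ⟫ • η + ⟪ψ, η⟫ • ξ) +
  ((1 / ‖φ‖ ^ 2) * (deriv (deriv ν) ‖φ‖ - deriv ν ‖φ‖ / ‖φ‖)) •
      ((⟪ξ, η⟫ * ⟪φ, ψ⟫) • φ + (⟪φ, η⟫ * ⟪ξ, ψ⟫) • φ + (⟪φ, η⟫ * ⟪φ, ψ⟫) • ξ) +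
  ((deriv (deriv (deriv ν)) ‖φ‖ / ‖φ‖ ^ 3 - 3 * deriv (deriv ν) ‖φ‖ / ‖φ‖ ^ 4 +
      3 * deriv ν ‖φ‖ / ‖φ‖ ^ 5) * (⟪φ, ξ⟫ * (⟪φ, η⟫ * ⟪φ, ψ⟫))) • φ

lemma smul3_norm_le (s t u v : ℝ) (x y z : EuclideanSpace ℝ (Fin 2)) :
    ‖s • (t • x + u • y + v • z)‖ ≤ |s| * (|t| * ‖x‖ + |u| * ‖y‖ + |v| * ‖z‖) := by
  rw [norm_smul, Real.norm_eq_abs]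
  have h : ‖t • x + u • y + v • z‖ ≤ |t| * ‖x‖ + |u| * ‖y‖ + |v| * ‖z‖ := by
    calc ‖t • x + u • y + v • z‖ ≤ ‖t • x‖ + ‖u • y‖ + ‖v • z‖ := norm_add₃_le
      _ = |t| * ‖x‖ + |u| * ‖y‖ + |v| * ‖z‖ := by
          simp [norm_smul, Real.norm_eq_abs]
  exact mul_le_mul_of_nonneg_left h (abs_nonneg s)

/-- for `φ ≠ 0`,
`|D³T(φ)(ψ,ψ,ξ)| ≤ (|ν̂'''(|φ|)||φ| + 9|ν̂''(|φ|)| + 12|ν̂'(|φ|)|/|φ|)|ψ|²|ξ|`. -/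
theorem D3T_bound (ν : ℝ → ℝ) (hC3 : ContDiff ℝ 3 ν) :
    ∀ φ : EuclideanSpace ℝ (Fin 2), φ ≠ 0 →
    ∀ ψ ξ : EuclideanSpace ℝ (Fin 2),
      ‖D3T ν φ ψ ψ ξ‖ ≤
        (|deriv (deriv (deriv ν)) ‖φ‖| * ‖φ‖ + 9 * |deriv (deriv ν) ‖φ‖| +
          12 * |deriv ν ‖φ‖| / ‖φ‖) * ‖ψ‖ ^ 2 * ‖ξ‖ := by
  intro φ hφ ψ ξ
  have hr0 : (0:ℝ) < ‖φ‖ := norm_pos_iff.mpr hφ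
  set r : ℝ := ‖φ‖ with hrdef
  set a : ℝ := deriv ν r with hadef
  set b : ℝ := deriv (deriv ν) r with hbdef
  set c : ℝ := deriv (deriv (deriv ν)) r with hcdef
  -- inner product bounds
  have hφψ : |⟪φ, ψ⟫| ≤ r * ‖ψ‖ := abs_real_inner_le_norm φ ψ
  have hφξ : |⟪φ, ξ⟫| ≤ r * ‖ξ‖ := abs_real_inner_le_norm φ ξ
  have hξψ : |⟪ξ, ψ⟫| ≤ ‖ξ‖ * ‖ψ‖ := abs_real_inner_le_norm ξ ψ
  have hψψ : |⟪ψ, ψ⟫| = ‖ψ‖ ^ 2 := by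
    rw [real_inner_self_eq_norm_sq]; exact abs_of_nonneg (by positivity)
  have hk1 : |(1 / r ^ 2) * (b - a / r)| ≤ (|b| + |a| / r) / r ^ 2 := by
    rw [abs_mul]
    have h1 : |(1:ℝ) / r ^ 2| = 1 / r ^ 2 := abs_of_pos (by positivity)
    have h2 : |b - a / r| ≤ |b| + |a| / r := by
      calc |b - a / r| ≤ |b| + |a / r| := abs_sub _ _
        _ = |b| + |a| / r := by rw [abs_div, abs_of_pos hr0]
    rw [h1]
    calc (1 / r ^ 2) * |b - a / r| ≤ (1 / r ^ 2) * (|b| + |a| / r) :=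
          mul_le_mul_of_nonneg_left h2 (by positivity)
      _ = (|b| + |a| / r) / r ^ 2 := by ring
  have hk4 : |c / r ^ 3 - 3 * b / r ^ 4 + 3 * a / r ^ 5| ≤
      |c| / r ^ 3 + 3 * |b| / r ^ 4 + 3 * |a| / r ^ 5 := by
    calc |c / r ^ 3 - 3 * b / r ^ 4 + 3 * a / r ^ 5|
        ≤ |c / r ^ 3 - 3 * b / r ^ 4| + |3 * a / r ^ 5| := abs_add_le _ _
      _ ≤ |c / r ^ 3| + |3 * b / r ^ 4| + |3 * a / r ^ 5| := by
          have := abs_sub (c / r ^ 3) (3 * b / r ^ 4); linarith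
      _ = |c| / r ^ 3 + 3 * |b| / r ^ 4 + 3 * |a| / r ^ 5 := by
          rw [abs_div, abs_div, abs_div, abs_mul, abs_mul]
          rw [abs_of_pos (show (0:ℝ) < r ^ 3 by positivity),
              abs_of_pos (show (0:ℝ) < r ^ 4 by positivity),
              abs_of_pos (show (0:ℝ) < r ^ 5 by positivity)]
          norm_num
  -- term bounds
  have h1 : ‖((1 / r ^ 2) * (b - a / r) * ⟪φ, ξ⟫) •
      (⟪φ, ψ⟫ • ψ + ⟪φ, ψ⟫ • ψ + ⟪ψ, ψ⟫ • φ)‖ ≤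
      3 * (|b| + |a| / r) * (‖ψ‖ ^ 2 * ‖ξ‖) := by
    calc ‖((1 / r ^ 2) * (b - a / r) * ⟪φ, ξ⟫) •
          (⟪φ, ψ⟫ • ψ + ⟪φ, ψ⟫ • ψ + ⟪ψ, ψ⟫ • φ)‖
        ≤ |(1 / r ^ 2) * (b - a / r) * ⟪φ, ξ⟫| *
          (|⟪φ, ψ⟫| * ‖ψ‖ + |⟪φ, ψ⟫| * ‖ψ‖ + |⟪ψ, ψ⟫| * r) := smul3_norm_le _ _ _ _ _ _ _
      _ ≤ ((|b| + |a| / r) / r ^ 2 * (r * ‖ξ‖)) *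
          (r * ‖ψ‖ * ‖ψ‖ + r * ‖ψ‖ * ‖ψ‖ + ‖ψ‖ ^ 2 * r) := by
          rw [abs_mul, hψψ]
          gcongr <;> positivity
      _ = 3 * (|b| + |a| / r) * (‖ψ‖ ^ 2 * ‖ξ‖) := by field_simp; ring
  have h2 : ‖(a / r) • (⟪ξ, ψ⟫ • ψ + ⟪ξ, ψ⟫ • ψ + ⟪ψ, ψ⟫ • ξ)‖ ≤
      3 * (|a| / r) * (‖ψ‖ ^ 2 * ‖ξ‖) := by
    calc ‖(a / r) • (⟪ξ, ψ⟫ • ψ + ⟪ξ, ψ⟫ • ψ + ⟪ψ, ψ⟫ • ξ)‖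
        ≤ |a / r| * (|⟪ξ, ψ⟫| * ‖ψ‖ + |⟪ξ, ψ⟫| * ‖ψ‖ + |⟪ψ, ψ⟫| * ‖ξ‖) :=
          smul3_norm_le _ _ _ _ _ _ _
      _ ≤ (|a| / r) * (‖ξ‖ * ‖ψ‖ * ‖ψ‖ + ‖ξ‖ * ‖ψ‖ * ‖ψ‖ + ‖ψ‖ ^ 2 * ‖ξ‖) := by
          rw [hψψ, abs_div, abs_of_pos hr0]
          gcongr <;> positivity
      _ = 3 * (|a| / r) * (‖ψ‖ ^ 2 * ‖ξ‖) := by ring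
  have h3 : ‖((1 / r ^ 2) * (b - a / r)) •
      ((⟪ξ, ψ⟫ * ⟪φ, ψ⟫) • φ + (⟪φ, ψ⟫ * ⟪ξ, ψ⟫) • φ + (⟪φ, ψ⟫ * ⟪φ, ψ⟫) • ξ)‖ ≤
      3 * (|b| + |a| / r) * (‖ψ‖ ^ 2 * ‖ξ‖) := by
    calc ‖((1 / r ^ 2) * (b - a / r)) •
          ((⟪ξ, ψ⟫ * ⟪φ, ψ⟫) • φ + (⟪φ, ψ⟫ * ⟪ξ, ψ⟫) • φ + (⟪φ, ψ⟫ * ⟪φ, ψ⟫) • ξ)‖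
        ≤ |(1 / r ^ 2) * (b - a / r)| *
          (|⟪ξ, ψ⟫ * ⟪φ, ψ⟫| * r + |⟪φ, ψ⟫ * ⟪ξ, ψ⟫| * r + |⟪φ, ψ⟫ * ⟪φ, ψ⟫| * ‖ξ‖) :=
          smul3_norm_le _ _ _ _ _ _ _
      _ ≤ ((|b| + |a| / r) / r ^ 2) *
          ((‖ξ‖ * ‖ψ‖) * (r * ‖ψ‖) * r + (r * ‖ψ‖) * (‖ξ‖ * ‖ψ‖) * r +
            (r * ‖ψ‖) * (r * ‖ψ‖) * ‖ξ‖) := by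
          rw [abs_mul ⟪ξ, ψ⟫, abs_mul ⟪φ, ψ⟫ ⟪ξ, ψ⟫, abs_mul ⟪φ, ψ⟫ ⟪φ, ψ⟫]
          gcongr <;> positivity
      _ = 3 * (|b| + |a| / r) * (‖ψ‖ ^ 2 * ‖ξ‖) := by field_simp; ring
  have h4 : ‖((c / r ^ 3 - 3 * b / r ^ 4 + 3 * a / r ^ 5) *
      (⟪φ, ξ⟫ * (⟪φ, ψ⟫ * ⟪φ, ψ⟫))) • φ‖ ≤
      (|c| * r + 3 * |b| + 3 * |a| / r) * (‖ψ‖ ^ 2 * ‖ξ‖) := by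
    rw [norm_smul, Real.norm_eq_abs, abs_mul, abs_mul ⟪φ, ξ⟫, abs_mul ⟪φ, ψ⟫]
    calc |c / r ^ 3 - 3 * b / r ^ 4 + 3 * a / r ^ 5| *
          (|⟪φ, ξ⟫| * (|⟪φ, ψ⟫| * |⟪φ, ψ⟫|)) * r
        ≤ (|c| / r ^ 3 + 3 * |b| / r ^ 4 + 3 * |a| / r ^ 5) *
          ((r * ‖ξ‖) * ((r * ‖ψ‖) * (r * ‖ψ‖))) * r := by
          gcongr <;> positivity
      _ = (|c| * r + 3 * |b| + 3 * |a| / r) * (‖ψ‖ ^ 2 * ‖ξ‖) := by field_simp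
  have hsum : ‖D3T ν φ ψ ψ ξ‖ ≤
      3 * (|b| + |a| / r) * (‖ψ‖ ^ 2 * ‖ξ‖) + 3 * (|a| / r) * (‖ψ‖ ^ 2 * ‖ξ‖) +
      3 * (|b| + |a| / r) * (‖ψ‖ ^ 2 * ‖ξ‖) +
      (|c| * r + 3 * |b| + 3 * |a| / r) * (‖ψ‖ ^ 2 * ‖ξ‖) := by
    rw [D3T]
    refine le_trans (norm_add_le _ _) ?_
    refine add_le_add (le_trans (norm_add_le _ _) ?_) h4
    refine add_le_add (le_trans (norm_add_le _ _) (add_le_add h1 h2)) h3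
  calc ‖D3T ν φ ψ ψ ξ‖ ≤ _ := hsum
    _ = (|c| * r + 9 * |b| + 12 * |a| / r) * ‖ψ‖ ^ 2 * ‖ξ‖ := by ring

end
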